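/- In the category of R-modules, Ext¹_R(ℤ/2ℤ, ℤ/2ℤ) is isomorphic to ℤ/2ℤ ⊕ ℤ/2ℤ as an abelian group, where ℤ/2ℤ carries its unique R-module structure. -/

import Mathlib

open Polynomial

noncomputable section

/-- The ring `R = ℤ[ξ]/(ξ²−1)`. -/
abbrev Runf : Type := ℤ[X] ⧸ Ideal.span {(X : ℤ[X]) ^ 2 - 1}

/-- The class of `ξ` in `R`. -/
def xi : Runf := Ideal.Quotient.mk _ X

/-- The ring homomorphism `eval₁ : R → ℤ` sending the class of `ξ` to `1`. -/
def evalOne : Runf →+* ℤ :=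
  Ideal.Quotient.lift _ (evalRingHom 1) (fun a ha => by
    obtain ⟨b, rfl⟩ := Ideal.mem_span_singleton.mp ha
    simp)

/-- The ring homomorphism `eval₋₁ : R → ℤ` sending the class of `ξ` to `-1`. -/
def evalNegOne : Runf →+* ℤ :=
  Ideal.Quotient.lift _ (evalRingHom (-1)) (fun a ha => by
    obtain ⟨b, rfl⟩ := Ideal.mem_span_singleton.mp ha
    simp)


open CategoryTheory

/-- The (unique) ring homomorphism `R → ℤ/2ℤ`. -/
def toZMod2 : Runf →+* ZMod 2 := (Int.castRingHom (ZMod 2)).comp evalOne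

/-- `ℤ/2ℤ` with its (unique) `R`-module structure. -/
instance : Module Runf (ZMod 2) := Module.compHom (ZMod 2) toZMod2


lemma xi_sq : xi * xi = 1 := by
  rw [show (1 : Runf) = Ideal.Quotient.mk _ 1 from rfl, xi, ← map_mul, Ideal.Quotient.eq]
  exact Ideal.subset_span (by rw [Set.mem_singleton_iff]; ring)

lemma evalOne_xi : evalOne xi = 1 := by simp [evalOne, xi]
lemma evalNegOne_xi : evalNegOne xi = -1 := by simp [evalNegOne, xi]

lemma unique0 (a b : ℤ) (h : (a : Runf) + (b : Runf) * xi = 0) : a = 0 ∧ b = 0 := by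
  have h1 := congrArg evalOne h
  have h2 := congrArg evalNegOne h
  simp [evalOne_xi, evalNegOne_xi] at h1 h2
  omega

lemma exists_repr (c : Runf) : ∃ a b : ℤ, c = (a : Runf) + (b : Runf) * xi := by
  have hxp : ∀ n : ℕ, xi ^ n = 1 ∨ xi ^ n = xi := by
    intro n
    induction n with
    | zero => left; rfl
    | succ n ih =>
      rcases ih with h | h
      · right; rw [pow_succ, h, one_mul]
      · left; rw [pow_succ, h, xi_sq]
  obtain ⟨p, rfl⟩ := Ideal.Quotient.mk_surjective c
  induction p using Polynomial.induction_on' with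
  | add p q hp hq =>
    obtain ⟨a, b, hab⟩ := hp
    obtain ⟨c, d, hcd⟩ := hq
    exact ⟨a + c, b + d, by push_cast; rw [map_add, hab, hcd]; ring⟩
  | monomial n a =>
    have key : Ideal.Quotient.mk (Ideal.span {(X : ℤ[X]) ^ 2 - 1}) (monomial n a)
        = (a : Runf) * xi ^ n := by
      rw [← Polynomial.C_mul_X_pow_eq_monomial, map_mul, map_pow]
      have hC : (Ideal.Quotient.mk (Ideal.span {(X : ℤ[X]) ^ 2 - 1})) (C a) = (a : Runf) := by
        exact eq_intCast ((Ideal.Quotient.mk (Ideal.span {(X : ℤ[X]) ^ 2 - 1})).comp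
          (C : ℤ →+* ℤ[X])) a
      rw [hC]
      rfl
    rcases hxp n with h | h
    · exact ⟨a, 0, by rw [key, h]; push_cast; ring⟩
    · exact ⟨0, a, by rw [key, h]; push_cast; ring⟩

lemma toZMod2_xi : toZMod2 xi = 1 := by simp [toZMod2, evalOne_xi]
lemma toZMod2_int (a : ℤ) : toZMod2 (a : Runf) = (a : ZMod 2) := by
  simp [toZMod2]
lemma smul_zmod2 (r : Runf) (x : ZMod 2) : r • x = toZMod2 r * x := rfl

abbrev R2 : Type := Runf × Runf

def dOne : R2 →ₗ[Runf] Runf :=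
  (2 : Runf) • LinearMap.fst Runf Runf Runf + (xi - 1) • LinearMap.snd Runf Runf Runf

def dD : R2 →ₗ[Runf] R2 :=
  LinearMap.prod ((xi - 1) • LinearMap.fst Runf Runf Runf)
    ((-2 : Runf) • LinearMap.fst Runf Runf Runf + (xi + 1) • LinearMap.snd Runf Runf Runf)

def dE : R2 →ₗ[Runf] R2 :=
  LinearMap.prod ((xi + 1) • LinearMap.fst Runf Runf Runf)
    ((2 : Runf) • LinearMap.fst Runf Runf Runf + (xi - 1) • LinearMap.snd Runf Runf Runf)

lemma xi_sq' : xi ^ 2 = 1 := by rw [sq]; exact xi_sq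

@[simp] lemma dOne_apply (p : R2) : dOne p = 2 * p.1 + (xi - 1) * p.2 := rfl
@[simp] lemma dD_apply (p : R2) : dD p = ((xi - 1) * p.1, -2 * p.1 + (xi + 1) * p.2) := rfl
@[simp] lemma dE_apply (p : R2) : dE p = ((xi + 1) * p.1, 2 * p.1 + (xi - 1) * p.2) := rfl

lemma dOne_dD : dOne.comp dD = 0 := by
  apply LinearMap.prod_ext <;> apply LinearMap.ext_ring <;> simp <;> (try constructor) <;> (try ring) <;> (try linear_combination xi_sq')
lemma dD_dE : dD.comp dE = 0 := by
  apply LinearMap.prod_ext <;> apply LinearMap.ext_ring <;> simp <;> (try constructor) <;> (try ring) <;> (try linear_combination xi_sq')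
lemma dE_dD : dE.comp dD = 0 := by
  apply LinearMap.prod_ext <;> apply LinearMap.ext_ring <;> simp <;> (try constructor) <;> (try ring) <;> (try linear_combination xi_sq')

open CategoryTheory

def XX : ℕ → ModuleCat Runf
  | 0 => ModuleCat.of Runf Runf
  | _ + 1 => ModuleCat.of Runf R2

def dd : ∀ n, XX (n + 1) ⟶ XX n
  | 0 => ModuleCat.ofHom dOne
  | n + 1 => if n % 2 = 0 then ModuleCat.ofHom dD else ModuleCat.ofHom dE

lemma dd_sq : ∀ n, dd (n + 1) ≫ dd n = 0 := by
  intro n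
  match n with
  | 0 =>
    show ModuleCat.ofHom dD ≫ ModuleCat.ofHom dOne = 0
    · rw [← ModuleCat.ofHom_comp, dOne_dD]; rfl
  | n + 1 =>
    show dd (n+2) ≫ dd (n+1) = 0
    rcases Nat.even_or_odd n with h | h
    · have h0 : n % 2 = 0 := Nat.even_iff.mp h
      have h1 : (n + 1) % 2 = 1 := by omega
      simp only [dd, h0, h1, one_ne_zero, if_true, if_false]
      exact congrArg ModuleCat.ofHom dD_dE
    · have h0 : n % 2 = 1 := Nat.odd_iff.mp h
      have h1 : (n + 1) % 2 = 0 := by omega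
      simp only [dd, h0, h1, one_ne_zero, if_true, if_false]
      exact congrArg ModuleCat.ofHom dE_dD

def CC : ChainComplex (ModuleCat Runf) ℕ := ChainComplex.of XX dd dd_sq

instance (n : ℕ) : CategoryTheory.Projective (CC.X n) := by
  cases n with
  | zero => exact ModuleCat.projective_of_free (Module.Basis.singleton PUnit.{1} Runf)
  | succ n =>
    exact ModuleCat.projective_of_free
      (Module.Basis.prod (Module.Basis.singleton PUnit.{1} Runf) (Module.Basis.singleton PUnit.{1} Runf))

def piZero : Runf →ₗ[Runf] ZMod 2 where
  toFun := toZMod2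
  map_add' := map_add _
  map_smul' r x := by simp [smul_zmod2, smul_eq_mul, map_mul]

@[simp] lemma piZero_apply (x : Runf) : piZero x = toZMod2 x := rfl

lemma exact_at_zero : ∀ x : Runf, piZero x = 0 → ∃ y : R2, dOne y = x := by
  intro x hx
  obtain ⟨a, b, h1⟩ := exists_repr x
  rw [h1, piZero_apply, map_add, map_mul, toZMod2_int, toZMod2_int, toZMod2_xi, mul_one,
    ← Int.cast_add, ZMod.intCast_zmod_eq_zero_iff_dvd] at hx
  obtain ⟨k, hk⟩ := hx
  refine ⟨((k : Runf), (b : Runf)), ?_⟩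
  rw [h1, dOne_apply]
  have h3 : ((a + b : ℤ) : Runf) = 2 * (k : Runf) := by rw [hk]; push_cast; ring
  push_cast at h3 ⊢
  linear_combination -h3

lemma exact_ker_dOne : ∀ x : R2, dOne x = 0 → ∃ y : R2, dD y = x := by
  intro x hx
  obtain ⟨a, b, h1⟩ := exists_repr x.1
  obtain ⟨c, d, h2⟩ := exists_repr x.2
  rw [dOne_apply, h1, h2] at hx
  obtain ⟨e1, e2⟩ := unique0 (2*a + d - c) (2*b + c - d)
    (by push_cast; linear_combination hx - (d : Runf) * xi_sq')
  have hb : b = -a := by omega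
  have hd : d = c - 2*a := by omega
  refine ⟨((a : Runf) * xi, (c : Runf)), Prod.ext ?_ ?_⟩
  · rw [dD_apply, h1, hb]
    push_cast
    linear_combination (a : Runf) * xi_sq'
  · rw [dD_apply, h2, hd]
    push_cast
    ring

lemma exact_ker_dD : ∀ x : R2, dD x = 0 → ∃ y : R2, dE y = x := by
  intro x hx
  obtain ⟨a, b, h1⟩ := exists_repr x.1
  obtain ⟨c, d, h2⟩ := exists_repr x.2
  have hx1 : (xi - 1) * x.1 = 0 := congrArg Prod.fst hx
  have hx2 : -2 * x.1 + (xi + 1) * x.2 = 0 := congrArg Prod.snd hx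
  rw [h1] at hx1
  rw [h1, h2] at hx2
  obtain ⟨e1, e2⟩ := unique0 (b - a) (a - b)
    (by push_cast; linear_combination hx1 - (b : Runf) * xi_sq')
  obtain ⟨e3, e4⟩ := unique0 (-2*a + c + d) (-2*b + c + d)
    (by push_cast; linear_combination hx2 - (d : Runf) * xi_sq')
  have hb : b = a := by omega
  have hc : c = 2*a - d := by omega
  refine ⟨((a : Runf), (d : Runf)), Prod.ext ?_ ?_⟩
  · rw [dE_apply, h1, hb]; push_cast; ring
  · rw [dE_apply, h2, hc]; push_cast; ring

lemma exact_ker_dE : ∀ x : R2, dE x = 0 → ∃ y : R2, dD y = x := by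
  intro x hx
  obtain ⟨a, b, h1⟩ := exists_repr x.1
  obtain ⟨c, d, h2⟩ := exists_repr x.2
  have hx1 : (xi + 1) * x.1 = 0 := congrArg Prod.fst hx
  have hx2 : 2 * x.1 + (xi - 1) * x.2 = 0 := congrArg Prod.snd hx
  rw [h1] at hx1
  rw [h1, h2] at hx2
  obtain ⟨e1, e2⟩ := unique0 (a + b) (a + b)
    (by push_cast; linear_combination hx1 - (b : Runf) * xi_sq')
  obtain ⟨e3, e4⟩ := unique0 (2*a + d - c) (2*b + c - d)
    (by push_cast; linear_combination hx2 - (d : Runf) * xi_sq')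
  have hb : b = -a := by omega
  have hc : c = 2*a + d := by omega
  refine ⟨((-a : ℤ) , (d : Runf)), Prod.ext ?_ ?_⟩
  · rw [dD_apply, h1, hb]; push_cast; ring
  · rw [dD_apply, h2, hc]; push_cast; ring

abbrev M2 : ModuleCat Runf := ModuleCat.of Runf (ZMod 2)

lemma toZMod2_two : toZMod2 (2 : Runf) = 0 := by
  have : ((2 : ℤ) : Runf) = (2 : Runf) := by push_cast; ring
  rw [← this, toZMod2_int]; decide
lemma toZMod2_xi_sub_one : toZMod2 (xi - 1) = 0 := by
  rw [map_sub, toZMod2_xi, map_one, sub_self]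
lemma toZMod2_xi_add_one : toZMod2 (xi + 1) = 0 := by
  rw [map_add, toZMod2_xi, map_one]; decide

lemma dOne_piZero : piZero.comp dOne = 0 :=
  LinearMap.ext fun p => by
    show piZero (dOne p) = 0
    rw [dOne_apply, map_add, piZero_apply, piZero_apply, map_mul, map_mul, toZMod2_two,
      toZMod2_xi_sub_one, zero_mul, zero_mul, add_zero]

def piZeroC : CC.X 0 ⟶ M2 := ModuleCat.ofHom piZero

lemma CC_d_one_zero : CC.d 1 0 = (ModuleCat.ofHom dOne : XX 1 ⟶ XX 0) :=
  ChainComplex.of_d XX dd 0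

lemma CC_d_comp_piZero : CC.d 1 0 ≫ piZeroC = 0 := by
  rw [CC_d_one_zero]
  exact congrArg ModuleCat.ofHom dOne_piZero

def piCC : CC ⟶ (ChainComplex.single₀ (ModuleCat Runf)).obj M2 :=
  (ChainComplex.toSingle₀Equiv CC M2).symm ⟨piZeroC, CC_d_comp_piZero⟩

lemma piCC_f_zero : piCC.f 0 = piZeroC :=
  ChainComplex.toSingle₀Equiv_symm_apply_f_zero _ _

lemma CC_exactAt_succ (n : ℕ) : CC.ExactAt (n + 1) := by
  rw [HomologicalComplex.exactAt_iff' CC (n + 2) (n + 1) n (by simp) (by simp),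
    ShortComplex.moduleCat_exact_iff]
  have e1 : CC.d (n + 2) (n + 1) = dd (n + 1) := ChainComplex.of_d XX dd (n + 1)
  have e2 : CC.d (n + 1) n = dd n := ChainComplex.of_d XX dd n
  intro x hx
  simp only [HomologicalComplex.shortComplexFunctor'_obj_g, e2] at hx
  simp only [HomologicalComplex.shortComplexFunctor'_obj_f, e1]
  match n with
  | 0 =>
    have hdd : dd 1 = (ModuleCat.ofHom dD : XX 2 ⟶ XX 1) := by simp [dd]; rfl
    rw [hdd]
    exact exact_ker_dOne x hx
  | k + 1 =>
    rcases Nat.even_or_odd k with h | h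
    · have h0 : k % 2 = 0 := Nat.even_iff.mp h
      have h1 : (k + 1) % 2 = 1 := by omega
      have hdd1 : dd (k + 2) = (ModuleCat.ofHom dE : XX (k+3) ⟶ XX (k+2)) := by simp [dd, h1]; rfl
      have hdd2 : dd (k + 1) = (ModuleCat.ofHom dD : XX (k+2) ⟶ XX (k+1)) := by simp [dd, h0]; rfl
      rw [hdd1]
      rw [hdd2] at hx
      exact exact_ker_dD x hx
    · have h0 : k % 2 = 1 := Nat.odd_iff.mp h
      have h1 : (k + 1) % 2 = 0 := by omega
      have hdd1 : dd (k + 2) = (ModuleCat.ofHom dD : XX (k+3) ⟶ XX (k+2)) := by simp [dd, h1]; rfl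
      have hdd2 : dd (k + 1) = (ModuleCat.ofHom dE : XX (k+2) ⟶ XX (k+1)) := by simp [dd, h0]; rfl
      rw [hdd1]
      rw [hdd2] at hx
      exact exact_ker_dE x hx

lemma piZero_surjective : Function.Surjective piZero := by
  intro y
  refine ⟨((y.val : ℤ) : Runf), ?_⟩
  rw [piZero_apply, toZMod2_int]
  simp [ZMod.intCast_cast]

def PR : ProjectiveResolution M2 where
  complex := CC
  π := piCC
  quasiIso := ⟨fun n => by
    cases n with
    | zero =>
      rw [ChainComplex.quasiIsoAt₀_iff, ShortComplex.quasiIso_iff_of_zeros']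
      rotate_left
      · rfl
      · rfl
      · rfl
      constructor
      · rw [ShortComplex.moduleCat_exact_iff]
        intro x hx
        simp only [HomologicalComplex.shortComplexFunctor'_map_τ₂, piCC_f_zero] at hx
        simp only [HomologicalComplex.shortComplexFunctor'_obj_f, CC_d_one_zero]
        exact exact_at_zero x hx
      · show Epi ((HomologicalComplex.shortComplexFunctor' _ _ 1 0 0).map piCC).τ₂
        have : ((HomologicalComplex.shortComplexFunctor' _ _ 1 0 0).map piCC).τ₂ = piZeroC := by
          simp only [HomologicalComplex.shortComplexFunctor'_map_τ₂, piCC_f_zero]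
          rfl
        rw [this]
        exact (ModuleCat.epi_iff_surjective _).mpr piZero_surjective
    | succ n =>
      rw [quasiIsoAt_iff_exactAt']
      · exact CC_exactAt_succ n
      · exact ChainComplex.exactAt_succ_single_obj _ _⟩

abbrev KK : CochainComplex (ModuleCat Runf) ℕ := CC.linearYonedaObj Runf M2

lemma toZMod2_neg_two : toZMod2 (-2 : Runf) = 0 := by
  rw [map_neg, toZMod2_two, neg_zero]

lemma KK_d_01 : KK.d 0 1 = 0 := by
  rw [ChainComplex.linearYonedaObj_d]
  apply ModuleCat.hom_ext
  apply LinearMap.ext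
  intro (φ : CC.X 0 ⟶ M2)
  show CC.d 1 0 ≫ φ = 0
  rw [CC_d_one_zero]
  apply ModuleCat.hom_ext
  apply LinearMap.ext
  intro (p : R2)
  show φ.hom (dOne p) = 0
  have hp : dOne p = (2 : Runf) • p.1 + (xi - 1) • p.2 := rfl
  have key : ∀ f : Runf →ₗ[Runf] ZMod 2, f (dOne p) = 0 := by
    intro f
    rw [hp, map_add, map_smul, map_smul, smul_zmod2, smul_zmod2, toZMod2_two,
      toZMod2_xi_sub_one, zero_mul, zero_mul, add_zero]
  exact key φ.hom

lemma CC_d_two_one : CC.d 2 1 = (ModuleCat.ofHom dD : XX 2 ⟶ XX 1) := by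
  have : CC.d 2 1 = dd 1 := ChainComplex.of_d XX dd 1
  rw [this]; simp [dd]; rfl

lemma KK_d_12 : KK.d 1 2 = 0 := by
  rw [ChainComplex.linearYonedaObj_d]
  apply ModuleCat.hom_ext
  apply LinearMap.ext
  intro (φ : CC.X 1 ⟶ M2)
  show CC.d 2 1 ≫ φ = 0
  rw [CC_d_two_one]
  apply ModuleCat.hom_ext
  apply LinearMap.ext
  intro (p : R2)
  show φ.hom (dD p) = 0
  have hp : dD p = (xi - 1) • (p.1, (0 : Runf)) + (-2 : Runf) • ((0 : Runf), p.1)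
      + (xi + 1) • ((0 : Runf), p.2) := by
    refine Prod.ext ?_ ?_ <;> simp [dD_apply, smul_eq_mul] <;> ring
  have key : ∀ f : R2 →ₗ[Runf] ZMod 2, f (dD p) = 0 := by
    intro f
    rw [hp, map_add, map_add, map_smul, map_smul, map_smul, smul_zmod2, smul_zmod2, smul_zmod2,
      toZMod2_xi_sub_one, toZMod2_neg_two, toZMod2_xi_add_one, zero_mul, zero_mul, zero_mul]
    simp
  exact key φ.hom

lemma KK_sc_f : (KK.sc 1).f = 0 := by
  have h : (ComplexShape.up ℕ).prev 1 = 0 := CochainComplex.prev_nat_succ 0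
  show KK.d ((ComplexShape.up ℕ).prev 1) 1 = 0
  rw [h, KK_d_01]

lemma KK_sc_g : (KK.sc 1).g = 0 := by
  have h : (ComplexShape.up ℕ).next 1 = 2 := CochainComplex.next ℕ 1
  show KK.d 1 ((ComplexShape.up ℕ).next 1) = 0
  rw [h, KK_d_12]

def hIso : KK.homology 1 ≅ KK.X 1 :=
  (ShortComplex.HomologyData.ofZeros (KK.sc 1) KK_sc_f KK_sc_g).left.homologyIso

def invF0 (z : ZMod 2 × ZMod 2) : R2 →ₗ[Runf] ZMod 2 where
  toFun p := toZMod2 p.1 * z.1 + toZMod2 p.2 * z.2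
  map_add' p q := by
    simp only [Prod.fst_add, Prod.snd_add, map_add]
    ring
  map_smul' r p := by
    simp only [Prod.smul_fst, Prod.smul_snd, smul_eq_mul, map_mul, RingHom.id_apply]
    rw [smul_zmod2]
    ring

@[simp] lemma invF0_apply (z : ZMod 2 × ZMod 2) (p : R2) :
    invF0 z p = toZMod2 p.1 * z.1 + toZMod2 p.2 * z.2 := rfl

def homEquiv : (ModuleCat.of Runf R2 ⟶ M2) ≃+ ZMod 2 × ZMod 2 where
  toFun φ := (φ (1, 0), φ (0, 1))
  invFun z := ModuleCat.ofHom (invF0 z)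
  left_inv φ := by
    apply ModuleCat.hom_ext
    apply LinearMap.ext
    intro (p : R2)
    have hp : p = p.1 • ((1 : Runf), (0 : Runf)) + p.2 • ((0 : Runf), (1 : Runf)) := by
      refine Prod.ext ?_ ?_ <;> simp
    have key : φ p = invF0 (φ (1, 0), φ (0, 1)) p := by
      conv_lhs => rw [hp]
      rw [map_add, map_smul, map_smul, smul_zmod2, smul_zmod2]
      rfl
    exact key.symm
  right_inv z := by
    refine Prod.ext ?_ ?_ <;>
      · show invF0 z _ = _
        simp
  map_add' φ ψ := rfl


/-- `Ext¹_R(ℤ/2ℤ, ℤ/2ℤ)` is isomorphic to `ℤ/2ℤ ⊕ ℤ/2ℤ` as an abelian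
group, where `ℤ/2ℤ` carries its unique `R`-module structure. -/
theorem stmt_10 :
    Nonempty
      ((((_root_.Ext Runf (ModuleCat Runf) 1).obj
          (Opposite.op (ModuleCat.of Runf (ZMod 2)))).obj (ModuleCat.of Runf (ZMod 2)))
        ≃+ (ZMod 2 × ZMod 2)) := by
  exact ⟨((PR.isoExt 1 M2).toLinearEquiv.toAddEquiv.trans
    (hIso.toLinearEquiv.toAddEquiv)).trans homEquiv⟩

end
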